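/- Let d ≥ 1, T > 0, δ > 0 and ε ∈ (0, 1/2). Let w : [0,T] → ℝ^d be a measurable path admitting a local time L such that ‖L_t − L_s‖_{L²(ℝ^d)} ≤ C_L |t−s|^{1/2+ε} for all 0 ≤ s ≤ t ≤ T and some constant C_L > 0. Let V ∈ L²(ℝ^d) satisfy ‖V‖_{H^{max(1, d/2)+δ}} < ∞ (so V has a bounded continuous representative, again denoted V). Let (W_t)_{t≥0} be a standard d-dimensional Brownian motion. Then almost surely, for every t ∈ [0,T]: writing L_{s,r} := L_r − L_s, the germ A^t on {(s,r) : 0 ≤ s ≤ r ≤ t} defined by A^t_{s,r} := (V * L_{s,r})(W_{t−s}) admits a sewing IA^t (its Riemann sums along any sequence of partitions of [0,t] with mesh tending to 0 converge), and this sewing satisfies (IA^t)_t = ∫_0^t V(W_{t−s} − w_s) ds. -/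

import Mathlib

open MeasureTheory ProbabilityTheory Filter
open scoped ENNReal FourierTransform

/-- A partition of the interval `[s, t]` into finitely many consecutive subintervals. -/
structure IntervalPartition (s t : ℝ) where
  n : ℕ
  pts : Fin (n + 1) → ℝ
  mono : Monotone pts
  first : pts 0 = s
  last : pts (Fin.last n) = t

/-- The mesh of a partition. -/
noncomputable def IntervalPartition.mesh {s t : ℝ} (P : IntervalPartition s t) : ℝ :=
  ⨆ i : Fin P.n, (P.pts i.succ - P.pts i.castSucc)

/-- The Riemann sum of a germ `A` along a partition `P` of `[s, t]`. -/
noncomputable def riemannSum {s t : ℝ} (A : ℝ → ℝ → ℝ) (P : IntervalPartition s t) : ℝ :=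
  ∑ i : Fin P.n, A (P.pts i.castSucc) (P.pts i.succ)

/-- The (inhomogeneous) Sobolev norm of order `s` of `g : ℝ^d → ℝ`, via the Fourier
transform, as a value in `[0,∞]`. -/
noncomputable def sobolevNorm (d : ℕ) (s : ℝ) (g : EuclideanSpace ℝ (Fin d) → ℝ) : ℝ≥0∞ :=
  (∫⁻ ξ : EuclideanSpace ℝ (Fin d),
      ENNReal.ofReal
        ((1 + ‖ξ‖) ^ (2 * s) *
          ‖𝓕 (fun x => (g x : ℂ)) ξ‖ ^ 2)) ^ (1 / 2 : ℝ)

/-- `L` is a local time for the measurable path `w`. -/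
structure IsLocalTime (d : ℕ) (T : ℝ) (w : ℝ → EuclideanSpace ℝ (Fin d))
    (L : ℝ → EuclideanSpace ℝ (Fin d) → ℝ) : Prop where
  meas_path : Measurable w
  nonneg : ∀ t z, 0 ≤ L t z
  meas : Measurable (Function.uncurry L)
  occupation : ∀ t ∈ Set.Icc (0 : ℝ) T, ∀ A : Set (EuclideanSpace ℝ (Fin d)),
    MeasurableSet A →
      volume {s : ℝ | s ∈ Set.Icc 0 t ∧ w s ∈ A} = ∫⁻ z in A, ENNReal.ofReal (L t z)

/-- `B` is a standard `d`-dimensional Brownian motion under `P`. -/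
structure IsBrownianMotion (d : ℕ) {Ω : Type*} [MeasurableSpace Ω] (P : Measure Ω)
    (B : ℝ → Ω → EuclideanSpace ℝ (Fin d)) : Prop where
  isProb : IsProbabilityMeasure P
  meas : ∀ t : ℝ, Measurable (B t)
  cont : ∀ ω, Continuous fun t => B t ω
  start : ∀ ω, B 0 ω = 0
  indep : ∀ (n : ℕ) (t : ℕ → ℝ), Monotone t → (∀ i, 0 ≤ t i) →
    iIndepFun
      (fun i : Fin n => fun ω => B (t (i + 1)) ω - B (t i) ω) P
  gauss : ∀ s t : ℝ, 0 ≤ s → s ≤ t →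
    Measure.map (fun ω => fun i : Fin d => B t ω i - B s ω i) P =
      Measure.pi fun _ : Fin d => gaussianReal 0 (t - s).toNNReal

section Aux

variable {d : ℕ} {T : ℝ} {w : ℝ → EuclideanSpace ℝ (Fin d)}
  {L : ℝ → EuclideanSpace ℝ (Fin d) → ℝ}

lemma bdd_integrableOn {g : ℝ → ℝ} (hg : Measurable g) {M : ℝ} (hM : ∀ u, |g u| ≤ M)
    {s : Set ℝ} (hs : volume s ≠ ⊤) : IntegrableOn g s volume := by
  refine Integrable.mono' (g := fun _ => M) (integrableOn_const hs)
    hg.aestronglyMeasurable.restrict ?_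
  exact Eventually.of_forall fun u => by simpa [Real.norm_eq_abs] using hM u

lemma occ_map (hL : IsLocalTime d T w L) {t : ℝ} (ht0 : 0 ≤ t) (htT : t ≤ T) :
    Measure.map w (volume.restrict (Set.Icc 0 t)) =
      volume.withDensity fun z => ENNReal.ofReal (L t z) := by
  ext A hA
  rw [Measure.map_apply hL.meas_path hA, Measure.restrict_apply' measurableSet_Icc,
    withDensity_apply _ hA, ← hL.occupation t ⟨ht0, htT⟩ A hA]
  congr 1
  ext u
  simp [Set.mem_setOf_eq, and_comm]

lemma L_lintegral (hL : IsLocalTime d T w L) {t : ℝ} (ht0 : 0 ≤ t) (htT : t ≤ T) :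
    ∫⁻ z, ENNReal.ofReal (L t z) = ENNReal.ofReal t := by
  have h := hL.occupation t ⟨ht0, htT⟩ Set.univ MeasurableSet.univ
  rw [Measure.restrict_univ] at h
  rw [← h]
  have h2 : {s : ℝ | s ∈ Set.Icc 0 t ∧ w s ∈ Set.univ} = Set.Icc 0 t := by
    ext u; simp
  rw [h2, Real.volume_Icc, sub_zero]

lemma L_integrable (hL : IsLocalTime d T w L) {t : ℝ} (ht0 : 0 ≤ t) (htT : t ≤ T) :
    Integrable (L t) volume := by
  refine ⟨(hL.meas.comp measurable_prodMk_left).aestronglyMeasurable, ?_⟩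
  rw [hasFiniteIntegral_iff_norm]
  calc ∫⁻ z, ENNReal.ofReal ‖L t z‖
      = ∫⁻ z, ENNReal.ofReal (L t z) := by
        refine lintegral_congr fun z => ?_
        rw [Real.norm_eq_abs, abs_of_nonneg (hL.nonneg t z)]
    _ = ENNReal.ofReal t := L_lintegral hL ht0 htT
    _ < ⊤ := ENNReal.ofReal_lt_top

lemma occ_integral (hL : IsLocalTime d T w L) {f : EuclideanSpace ℝ (Fin d) → ℝ}
    (hf : Measurable f) {t : ℝ} (ht0 : 0 ≤ t) (htT : t ≤ T) :
    ∫ u in Set.Icc 0 t, f (w u) = ∫ z, f z * L t z := by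
  rw [← integral_map hL.meas_path.aemeasurable hf.aestronglyMeasurable, occ_map hL ht0 htT]
  have h1 : (fun z => ENNReal.ofReal (L t z)) = fun z => ((L t z).toNNReal : ℝ≥0∞) := rfl
  have hLm : Measurable fun z => L t z := hL.meas.comp measurable_prodMk_left
  rw [h1, integral_withDensity_eq_integral_smul hLm.real_toNNReal f]
  refine integral_congr_ae (Eventually.of_forall fun z => ?_)
  show (L t z).toNNReal • f z = f z * L t z
  rw [NNReal.smul_def, Real.coe_toNNReal _ (hL.nonneg t z), smul_eq_mul, mul_comm]

lemma occ_key (hL : IsLocalTime d T w L) {V : EuclideanSpace ℝ (Fin d) → ℝ}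
    (hVc : Continuous V) {M : ℝ} (hM : ∀ x, |V x| ≤ M)
    (x : EuclideanSpace ℝ (Fin d)) {a b : ℝ} (ha : 0 ≤ a) (hab : a ≤ b) (hbT : b ≤ T) :
    (∫ z, V (x - z) * (L b z - L a z)) = ∫ u in a..b, V (x - w u) := by
  have hfc : Continuous fun z => V (x - z) := hVc.comp (continuous_const.sub continuous_id)
  have hfm := hfc.measurable
  have h0b : 0 ≤ b := ha.trans hab
  have haT : a ≤ T := hab.trans hbT
  have hInt : ∀ c : ℝ, 0 ≤ c → c ≤ T → Integrable (fun z => V (x - z) * L c z) volume := by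
    intro c hc0 hcT
    exact (L_integrable hL hc0 hcT).bdd_mul (c := M) hfm.aestronglyMeasurable
      (Eventually.of_forall fun z => by simpa [Real.norm_eq_abs] using hM (x - z))
  have hlhs : (∫ z, V (x - z) * (L b z - L a z))
      = (∫ z, V (x - z) * L b z) - ∫ z, V (x - z) * L a z := by
    rw [← integral_sub (hInt b h0b hbT) (hInt a ha haT)]
    refine integral_congr_ae (Eventually.of_forall fun z => ?_)
    ring
  have hiw : ∀ (s : Set ℝ), volume s ≠ ⊤ → IntegrableOn (fun u => V (x - w u)) s volume :=
    fun s hs => bdd_integrableOn (hfm.comp hL.meas_path) (fun u => hM _) hs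
  have hsplit : ∫ u in Set.Icc 0 b, V (x - w u)
      = (∫ u in Set.Icc 0 a, V (x - w u)) + ∫ u in Set.Ioc a b, V (x - w u) := by
    rw [← Set.Icc_union_Ioc_eq_Icc ha hab]
    exact setIntegral_union (Set.disjoint_left.mpr fun u hu1 hu2 => (not_le.mpr hu2.1) hu1.2)
      measurableSet_Ioc (hiw _ (by rw [Real.volume_Icc]; exact ENNReal.ofReal_ne_top))
      (hiw _ (by rw [Real.volume_Ioc]; exact ENNReal.ofReal_ne_top))
  have h1 := occ_integral hL (f := fun z => V (x - z)) hfm ha haT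
  have h2 := occ_integral hL (f := fun z => V (x - z)) hfm h0b hbT
  rw [intervalIntegral.integral_of_le hab, hlhs, ← h1, ← h2]
  linarith [hsplit]

end Aux

section Main

variable {d : ℕ} {T : ℝ} {w : ℝ → EuclideanSpace ℝ (Fin d)}
  {L : ℝ → EuclideanSpace ℝ (Fin d) → ℝ}

/-- Every point of `Ioc s r` lies in one of the subintervals of a partition. -/
lemma IntervalPartition.exists_mem_Ioc {s r : ℝ} (P : IntervalPartition s r) {u : ℝ} (hu : u ∈ Set.Ioc s r) :
    ∃ i : Fin P.n, u ∈ Set.Ioc (P.pts i.castSucc) (P.pts i.succ) := by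
  by_contra hcon
  push_neg at hcon
  have key : ∀ m : ℕ, ∀ hm : m < P.n + 1, P.pts ⟨m, hm⟩ < u := by
    intro m
    induction m with
    | zero =>
      intro hm
      have h0 : (⟨0, hm⟩ : Fin (P.n + 1)) = 0 := rfl
      rw [h0, P.first]
      exact hu.1
    | succ m ih =>
      intro hm
      have hm' : m < P.n + 1 := Nat.lt_of_succ_lt hm
      have h1 := ih hm'
      by_contra hle
      push_neg at hle
      have hmn : m < P.n := Nat.succ_lt_succ_iff.mp hm
      refine hcon ⟨m, hmn⟩ ⟨?_, ?_⟩
      · have : (⟨m, hmn⟩ : Fin P.n).castSucc = ⟨m, hm'⟩ := rfl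
        rw [this]; exact h1
      · have : (⟨m, hmn⟩ : Fin P.n).succ = ⟨m + 1, hm⟩ := rfl
        rw [this]; exact hle
  have hlast := key P.n (Nat.lt_succ_self _)
  have : (⟨P.n, Nat.lt_succ_self P.n⟩ : Fin (P.n + 1)) = Fin.last P.n := rfl
  rw [this, P.last] at hlast
  exact absurd hu.2 (not_le.mpr hlast)

lemma IntervalPartition.gap_le_mesh {s r : ℝ} (P : IntervalPartition s r) (i : Fin P.n) :
    P.pts i.succ - P.pts i.castSucc ≤ P.mesh := by
  rw [IntervalPartition.mesh]
  exact le_ciSup (f := fun i : Fin P.n => P.pts i.succ - P.pts i.castSucc)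
    (Set.Finite.bddAbove (Set.finite_range _)) i

lemma IntervalPartition.Ioc_subset {s r : ℝ} (P : IntervalPartition s r) (i : Fin P.n) :
    Set.Ioc (P.pts i.castSucc) (P.pts i.succ) ⊆ Set.Ioc s r := by
  apply Set.Ioc_subset_Ioc
  · conv_lhs => rw [← P.first]
    exact P.mono (Fin.zero_le _)
  · conv_rhs => rw [← P.last]
    exact P.mono (Fin.le_last _)

/-- If `u` lies in the `i0`-th subinterval, the indicator sum evaluates there. -/
lemma IntervalPartition.sum_indicator_eq {s r : ℝ} (P : IntervalPartition s r) (F : ℝ → ℝ → ℝ)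
    (i0 : Fin P.n) {u : ℝ} (hu : u ∈ Set.Ioc (P.pts i0.castSucc) (P.pts i0.succ)) :
    (∑ i : Fin P.n,
        (Set.Ioc (P.pts i.castSucc) (P.pts i.succ)).indicator (F (P.pts i.castSucc)) u)
      = F (P.pts i0.castSucc) u := by
  rw [Finset.sum_eq_single_of_mem i0 (Finset.mem_univ _)]
  · exact Set.indicator_of_mem hu _
  · intro j _ hj
    refine Set.indicator_of_notMem (fun hu' => ?_) _
    rcases lt_or_gt_of_ne hj with h | h
    · have hle : (j.succ : Fin (P.n + 1)) ≤ i0.castSucc := by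
        rw [Fin.le_def]
        simp only [Fin.val_succ, Fin.coe_castSucc]
        exact Fin.lt_def.mp h
      have := P.mono hle
      have h1 := hu'.2
      have h2 := hu.1
      linarith
    · have hle : (i0.succ : Fin (P.n + 1)) ≤ j.castSucc := by
        rw [Fin.le_def]
        simp only [Fin.val_succ, Fin.coe_castSucc]
        exact Fin.lt_def.mp h
      have := P.mono hle
      have h1 := hu.2
      have h2 := hu'.1
      linarith

lemma sewing_aux (hL : IsLocalTime d T w L)
    {V : EuclideanSpace ℝ (Fin d) → ℝ} (hVc : Continuous V) {M : ℝ} (hM : ∀ x, |V x| ≤ M)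
    (B : ℝ → EuclideanSpace ℝ (Fin d)) (hB : Continuous B) :
    ∀ t ∈ Set.Icc (0 : ℝ) T, ∃ IA : ℝ → ℝ,
      IA 0 = 0 ∧
      (∀ s r : ℝ, 0 ≤ s → s ≤ r → r ≤ t →
        ∀ Pseq : ℕ → IntervalPartition s r,
          Tendsto (fun k => (Pseq k).mesh) atTop (nhds 0) →
          Tendsto
            (fun k =>
              riemannSum (fun s' r' => ∫ z, V (B (t - s') - z) * (L r' z - L s' z)) (Pseq k))
            atTop (nhds (IA r - IA s))) ∧
      IA t = ∫ s in (0 : ℝ)..t, V (B (t - s) - w s) := by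
  intro t ht
  have hM0 : 0 ≤ M := (abs_nonneg _).trans (hM 0)
  have hGmeas : Measurable fun u => V (B (t - u) - w u) :=
    hVc.measurable.comp
      (((hB.comp (continuous_const.sub continuous_id)).measurable).sub hL.meas_path)
  have hG_ii : ∀ a b : ℝ, IntervalIntegrable (fun u => V (B (t - u) - w u)) volume a b := by
    intro a b
    rw [intervalIntegrable_iff]
    refine bdd_integrableOn hGmeas (fun u => hM _) ?_
    rw [Set.uIoc, Real.volume_Ioc]
    exact ENNReal.ofReal_ne_top
  refine ⟨fun u => ∫ v in (0:ℝ)..u, V (B (t - v) - w v),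
    intervalIntegral.integral_same, ?_, rfl⟩
  intro s r hs0 hsr hrt Pseq hmesh
  have hgoal_eq : (fun u => ∫ v in (0:ℝ)..u, V (B (t - v) - w v)) r
        - (fun u => ∫ v in (0:ℝ)..u, V (B (t - v) - w v)) s
      = ∫ u in Set.Ioc s r, V (B (t - u) - w u) := by
    show (∫ v in (0:ℝ)..r, V (B (t - v) - w v)) - ∫ v in (0:ℝ)..s, V (B (t - v) - w v)
      = ∫ u in Set.Ioc s r, V (B (t - u) - w u)
    rw [intervalIntegral.integral_interval_sub_left (hG_ii 0 r) (hG_ii 0 s),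
      intervalIntegral.integral_of_le hsr]
  rw [hgoal_eq]
  -- rewrite the Riemann sums as integrals of indicator sums
  have hriem : ∀ k,
      riemannSum (fun s' r' => ∫ z, V (B (t - s') - z) * (L r' z - L s' z)) (Pseq k)
        = ∫ u in Set.Ioc s r, ∑ i : Fin (Pseq k).n,
            (Set.Ioc ((Pseq k).pts i.castSucc) ((Pseq k).pts i.succ)).indicator
              (fun u => V (B (t - (Pseq k).pts i.castSucc) - w u)) u := by
    intro k
    rw [integral_finset_sum]
    · unfold riemannSum
      refine Finset.sum_congr rfl fun i _ => ?_
      have h1 : s ≤ (Pseq k).pts i.castSucc := by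
        conv_lhs => rw [← (Pseq k).first]
        exact (Pseq k).mono (Fin.zero_le _)
      have h2 : (Pseq k).pts i.castSucc ≤ (Pseq k).pts i.succ :=
        (Pseq k).mono (Fin.castSucc_le_succ i)
      have h3 : (Pseq k).pts i.succ ≤ r := by
        conv_rhs => rw [← (Pseq k).last]
        exact (Pseq k).mono (Fin.le_last _)
      show (∫ z, V (B (t - (Pseq k).pts i.castSucc) - z)
            * (L ((Pseq k).pts i.succ) z - L ((Pseq k).pts i.castSucc) z)) = _
      rw [occ_key hL hVc hM _ (hs0.trans h1) h2 ((h3.trans hrt).trans ht.2),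
        intervalIntegral.integral_of_le h2,
        integral_indicator measurableSet_Ioc,
        Measure.restrict_restrict measurableSet_Ioc,
        Set.inter_eq_left.mpr ((Pseq k).Ioc_subset i)]
    · intro i _
      refine Integrable.indicator ?_ measurableSet_Ioc
      refine bdd_integrableOn (hVc.measurable.comp (measurable_const.sub hL.meas_path))
        (fun u => hM _) ?_
      rw [Real.volume_Ioc]
      exact ENNReal.ofReal_ne_top
  -- dominated convergence
  have hdct : Tendsto
      (fun k => ∫ u in Set.Ioc s r, ∑ i : Fin (Pseq k).n,
          (Set.Ioc ((Pseq k).pts i.castSucc) ((Pseq k).pts i.succ)).indicator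
            (fun u => V (B (t - (Pseq k).pts i.castSucc) - w u)) u)
      atTop (nhds (∫ u in Set.Ioc s r, V (B (t - u) - w u))) := by
    refine tendsto_integral_of_dominated_convergence (fun _ => M) ?_ ?_ ?_ ?_
    · intro k
      refine (Finset.measurable_sum Finset.univ fun i _ => ?_).aestronglyMeasurable
      exact (hVc.measurable.comp (measurable_const.sub hL.meas_path)).indicator
        measurableSet_Ioc
    · refine integrableOn_const ?_
      rw [Real.volume_Ioc]
      exact ENNReal.ofReal_ne_top
    · intro k
      refine Eventually.of_forall fun u => ?_
      rw [Real.norm_eq_abs]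
      by_cases hex : ∃ i : Fin (Pseq k).n,
          u ∈ Set.Ioc ((Pseq k).pts i.castSucc) ((Pseq k).pts i.succ)
      · obtain ⟨i, hi⟩ := hex
        rw [(Pseq k).sum_indicator_eq (fun a u => V (B (t - a) - w u)) i hi]
        exact hM _
      · push_neg at hex
        rw [Finset.sum_eq_zero fun i _ => Set.indicator_of_notMem (hex i) _]
        simpa using hM0
    · refine (ae_restrict_mem measurableSet_Ioc).mono fun u hu => ?_
      have hchoice : ∀ k, ∃ a : ℝ,
          ((∑ i : Fin (Pseq k).n,
            (Set.Ioc ((Pseq k).pts i.castSucc) ((Pseq k).pts i.succ)).indicator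
              (fun u => V (B (t - (Pseq k).pts i.castSucc) - w u)) u)
            = V (B (t - a) - w u)) ∧ u - (Pseq k).mesh ≤ a ∧ a < u := by
        intro k
        obtain ⟨i, hi⟩ := (Pseq k).exists_mem_Ioc hu
        refine ⟨(Pseq k).pts i.castSucc,
          (Pseq k).sum_indicator_eq (fun a u => V (B (t - a) - w u)) i hi, ?_, hi.1⟩
        have hgap := (Pseq k).gap_le_mesh i
        have := hi.2
        linarith
      choose a ha1 ha2 ha3 using hchoice
      have hatend : Tendsto a atTop (nhds u) := by
        refine tendsto_of_tendsto_of_tendsto_of_le_of_le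
          (g := fun k => u - (Pseq k).mesh) (h := fun _ => u) ?_ tendsto_const_nhds ha2
          (fun k => (ha3 k).le)
        simpa using tendsto_const_nhds.sub hmesh
      have hcont : Continuous fun x : ℝ => V (B (t - x) - w u) :=
        hVc.comp ((hB.comp (continuous_const.sub continuous_id)).sub continuous_const)
      have := (hcont.tendsto u).comp hatend
      refine Tendsto.congr (fun k => ?_) this
      exact (ha1 k).symm
  exact hdct.congr fun k => (hriem k).symm

end Main


/-- **Identification of the Riemann integral as a sewing.** Let `w : [0,T] → ℝ^d` be a
measurable path with a local time `L` whose increments satisfy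
`‖L_t - L_s‖_{L²} ≤ C_L |t-s|^{1/2+ε}`, and let `V ∈ L²` be bounded and continuous with
`‖V‖_{H^{max(1,d/2)+δ}} < ∞`. Let `W` be a standard `d`-dimensional Brownian motion.
Then almost surely, for every `t ∈ [0,T]`, the germ
`A^t_{s,r} = (V * L_{s,r})(W_{t-s})` admits a sewing `IA^t` on `[0,t]` (its Riemann sums
along any sequence of partitions with mesh tending to `0` converge), and
`(IA^t)_t = ∫_0^t V(W_{t-s} - w_s) ds`. -/
theorem riemann_integral_as_sewing (d : ℕ) (hd : 1 ≤ d) (T : ℝ) (hT : 0 < T)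
    (δ ε : ℝ) (hδ : 0 < δ) (hε0 : 0 < ε) (hε1 : ε < 1 / 2)
    (w : ℝ → EuclideanSpace ℝ (Fin d)) (L : ℝ → EuclideanSpace ℝ (Fin d) → ℝ)
    (hL : IsLocalTime d T w L)
    (C_L : ℝ) (hCL : 0 < C_L)
    (hLhold : ∀ s t : ℝ, 0 ≤ s → s ≤ t → t ≤ T →
      eLpNorm (fun z => L t z - L s z) 2 volume ≤
        ENNReal.ofReal (C_L * (t - s) ^ (1 / 2 + ε)))
    (V : EuclideanSpace ℝ (Fin d) → ℝ) (hVc : Continuous V) (hVb : ∃ M : ℝ, ∀ x, |V x| ≤ M)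
    (hVL2 : MemLp V 2 volume)
    (hVH : sobolevNorm d (max 1 ((d : ℝ) / 2) + δ) V < ∞)
    {Ω : Type*} [MeasurableSpace Ω] (P : Measure Ω)
    (W : ℝ → Ω → EuclideanSpace ℝ (Fin d)) (hW : IsBrownianMotion d P W) :
    ∀ᵐ ω ∂P, ∀ t ∈ Set.Icc (0 : ℝ) T,
      ∃ IA : ℝ → ℝ,
        IA 0 = 0 ∧
        (∀ s r : ℝ, 0 ≤ s → s ≤ r → r ≤ t →
          ∀ Pseq : ℕ → IntervalPartition s r,
            Tendsto (fun k => (Pseq k).mesh) atTop (nhds 0) →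
            Tendsto
              (fun k =>
                riemannSum
                  (fun s' r' => ∫ z, V (W (t - s') ω - z) * (L r' z - L s' z))
                  (Pseq k))
              atTop (nhds (IA r - IA s))) ∧
        IA t = ∫ s in (0 : ℝ)..t, V (W (t - s) ω - w s) := by
  obtain ⟨M, hM⟩ := hVb
  refine Filter.Eventually.of_forall fun ω => ?_
  exact sewing_aux hL hVc hM (fun u => W u ω) (hW.cont ω)
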